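/- Let C be a symmetric monoidal category with unit object 𝟙 having filtered colimits and such that the tensor product preserves filtered colimits in each variable. Let I be a nonempty directed partial order and let (C_i, c_i)_{i ∈ I} be a functor from I to the over category C/𝟙 such that each (C_i, c_i) is a coidempotent object. Let C_∞ = colim_{i ∈ I} C_i and let c_∞ : C_∞ → 𝟙 be the morphism induced by the c_i. Then (C_∞, c_∞) is a coidempotent object, and it is a least upper bound of the family (C_i, c_i) in the preorder of coidempotent objects. -/

import Mathlib

open CategoryTheory CategoryTheory.Limits MonoidalCategory

universe v u

variable {C : Type u} [Category.{v} C] [MonoidalCategory C]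

/-- `c : C₀ ⟶ 𝟙` is a coidempotent object if `C₀ ◁ c : C₀ ⊗ C₀ ⟶ C₀ ⊗ 𝟙` is invertible. -/
def Coidempotent {C₀ : C} (c : C₀ ⟶ 𝟙_ C) : Prop := IsIso (C₀ ◁ c)

lemma coidem_aux_right [BraidedCategory C] {X : C} (x : X ⟶ 𝟙_ C)
    (hx : IsIso (X ◁ x)) : IsIso (x ▷ X) := by
  have h' : (x ▷ X) ≫ (β_ (𝟙_ C) X).hom = (β_ X X).hom ≫ (X ◁ x) :=
    BraidedCategory.braiding_naturality_left x X
  have h : (x ▷ X) = (β_ X X).hom ≫ (X ◁ x) ≫ (β_ (𝟙_ C) X).inv := by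
    rw [← Category.assoc, ← h']
    simp
  rw [h]
  haveI := hx
  infer_instance

/-- For a coidempotent object the two "counit" maps `X ⊗ X ⟶ X` agree. -/
lemma coidem_unitors_eq {X : C} (x : X ⟶ 𝟙_ C)
    (hA : IsIso (X ◁ x)) (hB : IsIso (x ▷ X)) :
    (X ◁ x) ≫ (ρ_ X).hom = (x ▷ X) ≫ (λ_ X).hom := by
  haveI := hA; haveI := hB
  set A : X ⊗ X ⟶ X := (X ◁ x) ≫ (ρ_ X).hom with hAdef
  set B : X ⊗ X ⟶ X := (x ▷ X) ≫ (λ_ X).hom with hBdef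
  clear_value A B
  have hAx : A ≫ x = B ≫ x := by
    have h1 : A ≫ x = ((X ◁ x) ≫ (x ▷ 𝟙_ C)) ≫ (ρ_ (𝟙_ C)).hom := by
      rw [hAdef]; simp [MonoidalCategory.rightUnitor_naturality]
    have h2 : B ≫ x = ((x ▷ X) ≫ (𝟙_ C ◁ x)) ≫ (λ_ (𝟙_ C)).hom := by
      rw [hBdef]; simp [MonoidalCategory.leftUnitor_naturality]
    rw [h1, h2, whisker_exchange, unitors_equal]
  have hstep : (A ▷ X) = (B ▷ X) := by
    have egen : ∀ h : X ⊗ X ⟶ X, (h ▷ X) ≫ B = ((h ≫ x) ▷ X) ≫ (λ_ X).hom := by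
      intro h
      rw [hBdef, comp_whiskerRight]
      simp only [Category.assoc]
    have hBiso : IsIso B := by rw [hBdef]; infer_instance
    rw [← cancel_mono B, egen A, egen B, hAx]
  -- cancel the whiskering
  have hiso2 : IsIso ((X ⊗ X) ◁ x) := by
    rw [tensor_whiskerLeft]
    haveI : IsIso (X ◁ (X ◁ x)) := by
      have := (whiskerLeftIso X (asIso (X ◁ x))).isIso_hom
      simpa using this
    infer_instance
  have hw : ((X ⊗ X) ◁ x) ≫ (A ▷ 𝟙_ C) = ((X ⊗ X) ◁ x) ≫ (B ▷ 𝟙_ C) := by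
    rw [whisker_exchange, whisker_exchange, hstep]
  have hAB1 : (A ▷ 𝟙_ C) = (B ▷ 𝟙_ C) := by
    rwa [cancel_epi ((X ⊗ X) ◁ x)] at hw
  calc A = (ρ_ (X ⊗ X)).inv ≫ (A ▷ 𝟙_ C) ≫ (ρ_ X).hom := by
        simp [MonoidalCategory.rightUnitor_naturality]
    _ = (ρ_ (X ⊗ X)).inv ≫ (B ▷ 𝟙_ C) ≫ (ρ_ X).hom := by rw [hAB1]
    _ = B := by simp [MonoidalCategory.rightUnitor_naturality]

/-- Morphisms over `𝟙` between coidempotent objects are unique. -/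
lemma coidem_unique [BraidedCategory C] {X D : C} (x : X ⟶ 𝟙_ C) (d : D ⟶ 𝟙_ C)
    (hx : IsIso (X ◁ x)) (hd : IsIso (D ◁ d))
    {f g : X ⟶ D} (hf : f ≫ d = x) (hg : g ≫ d = x) : f = g := by
  have hx' := coidem_aux_right x hx
  have hd' := coidem_aux_right d hd
  have h1 := coidem_unitors_eq x hx hx'
  have h2 := coidem_unitors_eq d hd hd'
  have key : ((X ◁ x) ≫ (ρ_ X).hom) ≫ f = ((x ▷ X) ≫ (λ_ X).hom) ≫ g := by
    have t1 : ((f ▷ X) ≫ (D ◁ g)) ≫ (D ◁ d) ≫ (ρ_ D).hom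
        = ((X ◁ x) ≫ (ρ_ X).hom) ≫ f := by
      rw [Category.assoc, ← MonoidalCategory.whiskerLeft_comp_assoc, hg,
        ← whisker_exchange_assoc]
      simp [MonoidalCategory.rightUnitor_naturality]
    have t2 : ((X ◁ g) ≫ (f ▷ D)) ≫ (d ▷ D) ≫ (λ_ D).hom
        = ((x ▷ X) ≫ (λ_ X).hom) ≫ g := by
      rw [Category.assoc, ← comp_whiskerRight_assoc, hf, whisker_exchange_assoc]
      simp [MonoidalCategory.leftUnitor_naturality]
    have teq : (f ▷ X) ≫ (D ◁ g) = (X ◁ g) ≫ (f ▷ D) := (whisker_exchange f g).symm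
    calc ((X ◁ x) ≫ (ρ_ X).hom) ≫ f = ((f ▷ X) ≫ (D ◁ g)) ≫ (D ◁ d) ≫ (ρ_ D).hom := t1.symm
      _ = ((X ◁ g) ≫ (f ▷ D)) ≫ (D ◁ d) ≫ (ρ_ D).hom := by rw [teq]
      _ = ((X ◁ g) ≫ (f ▷ D)) ≫ (d ▷ D) ≫ (λ_ D).hom := by rw [h2]
      _ = ((x ▷ X) ≫ (λ_ X).hom) ≫ g := t2
  rw [← h1] at key
  haveI := hx
  exact (cancel_epi ((X ◁ x) ≫ (ρ_ X).hom)).mp key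

theorem coidempotent_directed_join [SymmetricCategory C] [HasFilteredColimits C]
    (hL : ∀ X : C, PreservesFilteredColimits (tensorLeft X))
    (hR : ∀ X : C, PreservesFilteredColimits (tensorRight X))
    {I : Type v} [PartialOrder I] [Nonempty I] [IsDirected I (· ≤ ·)]
    (F : I ⥤ C) (c : F ⟶ (Functor.const I).obj (𝟙_ C))
    (hc : ∀ i : I, Coidempotent (c.app i))
    (c' : colimit F ⟶ 𝟙_ C) (hc' : ∀ i : I, colimit.ι F i ≫ c' = c.app i) :
    Coidempotent c' ∧
      (∀ i : I, ∃ f : F.obj i ⟶ colimit F, f ≫ c' = c.app i) ∧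
      ∀ {D : C} (d : D ⟶ 𝟙_ C), Coidempotent d →
        (∀ i : I, ∃ f : F.obj i ⟶ D, f ≫ d = c.app i) →
        ∃ g : colimit F ⟶ D, g ≫ d = c' := by
  haveI := hL (colimit F)
  haveI := hR (colimit F)
  haveI := hR (𝟙_ C)
  -- naturality of c in convenient form
  have cnat : ∀ {i j : I} (φ : i ⟶ j), F.map φ ≫ c.app j = c.app i := by
    intro i j φ
    have := c.naturality φ
    simpa using this
  -- square: (F φ ⊗ F φ) ≫ (F j ◁ c j) = (F i ◁ c i) ≫ (F φ ▷ 𝟙)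
  have square : ∀ {i j : I} (φ : i ⟶ j),
      (F.map φ ⊗ₘ F.map φ) ≫ (F.obj j ◁ c.app j)
        = (F.obj i ◁ c.app i) ≫ (F.map φ ▷ 𝟙_ C) := by
    intro i j φ
    rw [MonoidalCategory.tensorHom_def]
    rw [Category.assoc, ← MonoidalCategory.whiskerLeft_comp]
    rw [cnat φ]
    exact (whisker_exchange _ _).symm
  -- tensor of legs composed with whiskered c'
  have legw : ∀ i : I, (colimit.ι F i ⊗ₘ colimit.ι F i) ≫ (colimit F ◁ c')
      = (F.obj i ◁ c.app i) ≫ (colimit.ι F i ▷ 𝟙_ C) := by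
    intro i
    rw [MonoidalCategory.tensorHom_def, Category.assoc, ← MonoidalCategory.whiskerLeft_comp, hc' i]
    exact (whisker_exchange _ _).symm
  -- colimit presentations
  let hcol0 : IsColimit ((tensorRight (𝟙_ C)).mapCocone (colimit.cocone F)) :=
    isColimitOfPreserves _ (colimit.isColimit F)
  let hcol1 : IsColimit ((tensorRight (colimit F)).mapCocone (colimit.cocone F)) :=
    isColimitOfPreserves _ (colimit.isColimit F)
  -- each F i ◁ c i is iso
  haveI hciso : ∀ i : I, IsIso (F.obj i ◁ c.app i) := fun i => hc i
  -- the inverse cocone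
  let s : Cocone (F ⋙ tensorRight (𝟙_ C)) :=
    { pt := colimit F ⊗ colimit F
      ι :=
        { app := fun i => inv (F.obj i ◁ c.app i) ≫ (colimit.ι F i ⊗ₘ colimit.ι F i)
          naturality := by
            intro i j φ
            simp only [Functor.comp_obj, Functor.comp_map, Functor.flip_obj_obj, curriedTensor_obj_obj, Functor.flip_obj_map,
              curriedTensor_map_app,
              Functor.const_obj_obj, Functor.const_obj_map, Category.comp_id]
            rw [← cancel_epi (F.obj i ◁ c.app i)]
            rw [IsIso.hom_inv_id_assoc, ← reassoc_of% (square φ), IsIso.hom_inv_id_assoc]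
            rw [tensorHom_comp_tensorHom, colimit.w F φ] } }
  let v : colimit F ⊗ 𝟙_ C ⟶ colimit F ⊗ colimit F := hcol0.desc s
  have vfac : ∀ i : I, (colimit.ι F i ▷ 𝟙_ C) ≫ v
      = inv (F.obj i ◁ c.app i) ≫ (colimit.ι F i ⊗ₘ colimit.ι F i) := by
    intro i
    have := hcol0.fac s i
    simp only [Functor.mapCocone_ι_app, Functor.flip_obj_map, curriedTensor_map_app, colimit.cocone_ι] at this; exact this
  have hvw : v ≫ (colimit F ◁ c') = 𝟙 _ := by
    apply hcol0.hom_ext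
    intro i
    simp only [Functor.mapCocone_ι_app, Functor.flip_obj_map, curriedTensor_map_app, colimit.cocone_ι, Category.comp_id]
    rw [reassoc_of% (vfac i), legw i, IsIso.inv_hom_id_assoc]
    simp
  have keyk : ∀ k : I, (colimit.ι F k ⊗ₘ colimit.ι F k) ≫ (colimit F ◁ c') ≫ v
      = colimit.ι F k ⊗ₘ colimit.ι F k := by
    intro k
    rw [reassoc_of% (legw k), vfac k, IsIso.hom_inv_id_assoc]
  have keyij : ∀ i j : I, (colimit.ι F i ⊗ₘ colimit.ι F j) ≫ (colimit F ◁ c') ≫ v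
      = colimit.ι F i ⊗ₘ colimit.ι F j := by
    intro i j
    obtain ⟨k, hik, hjk⟩ := directed_of (· ≤ ·) i j
    have e : (colimit.ι F i ⊗ₘ colimit.ι F j)
        = (F.map (homOfLE hik) ⊗ₘ F.map (homOfLE hjk)) ≫ (colimit.ι F k ⊗ₘ colimit.ι F k) := by
      rw [tensorHom_comp_tensorHom, colimit.w F (homOfLE hik), colimit.w F (homOfLE hjk)]
    rw [e, Category.assoc, keyk k]
  have hwv : (colimit F ◁ c') ≫ v = 𝟙 _ := by
    apply hcol1.hom_ext
    intro i
    haveI := hL (F.obj i)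
    apply (isColimitOfPreserves (tensorLeft (F.obj i)) (colimit.isColimit F)).hom_ext
    intro j
    simp only [Functor.mapCocone_ι_app, Functor.flip_obj_map, curriedTensor_map_app, curriedTensor_obj_map, colimit.cocone_ι,
      Category.comp_id, Category.assoc]
    have lhs0 : (F.obj i ◁ colimit.ι F j) ≫ (colimit.ι F i ▷ colimit F)
        = colimit.ι F i ⊗ₘ colimit.ι F j := (tensorHom_def' _ _).symm
    rw [reassoc_of% lhs0, keyij i j, ← lhs0]
    simp
  have part1 : Coidempotent c' := by
    exact ⟨v, hwv, hvw⟩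
  refine ⟨part1, fun i => ⟨colimit.ι F i, hc' i⟩, ?_⟩
  intro D d hd hmaps
  choose f hf using hmaps
  let t : Cocone F :=
    { pt := D
      ι :=
        { app := f
          naturality := by
            intro i j φ
            simp only [Functor.const_obj_obj, Functor.const_obj_map, Category.comp_id]
            refine coidem_unique (c.app i) d (hc i) hd ?_ (hf i)
            rw [Category.assoc, hf j, cnat φ] } }
  refine ⟨colimit.desc F t, ?_⟩
  apply colimit.hom_ext
  intro i
  rw [colimit.ι_desc_assoc, hc' i]
  exact hf i
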